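/- arXiv:2502.06477 — 4 statements merged into one kernel-verified Lean document; each statement's English description precedes it below -/
import Mathlib

section
/- For all real numbers x, y ≥ 0, |x - y| = |h₀(x) - h₀(y)| + |h₁(x) - h₁(y)|. -/
noncomputable def h0 (x : ℝ) : ℝ := min (x - ⌊x / 2⌋) ⌈x / 2⌉
noncomputable def h1 (x : ℝ) : ℝ := max (⌊x / 2⌋ : ℝ) (x - ⌈x / 2⌉)

lemma h_sum (x : ℝ) : h0 x + h1 x = x := by
  unfold h0 h1
  rcases le_total (x - (⌊x / 2⌋ : ℝ)) (⌈x / 2⌉ : ℝ) with h | h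
  · rw [min_eq_left h, max_eq_left (by linarith)]; ring
  · rw [min_eq_right h, max_eq_right (by linarith)]; ring

lemma h0_mono {x y : ℝ} (hxy : x ≤ y) : h0 x ≤ h0 y := by
  unfold h0
  have hf : (⌊x / 2⌋ : ℝ) ≤ ⌊y / 2⌋ := by
    exact_mod_cast Int.floor_le_floor (by linarith)
  have hc : (⌈x / 2⌉ : ℝ) ≤ ⌈y / 2⌉ := by
    exact_mod_cast Int.ceil_le_ceil (by linarith)
  apply le_min
  swap
  · exact le_trans (min_le_right _ _) hc
  · rcases eq_or_lt_of_le (Int.floor_le_floor (by linarith : x / 2 ≤ y / 2)) with h | h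
    · refine le_trans (min_le_left _ _) ?_
      rw [h]; linarith
    · refine le_trans (min_le_right _ _) ?_
      have h1 : (⌈x / 2⌉ : ℝ) ≤ ⌊x / 2⌋ + 1 := by
        exact_mod_cast Int.ceil_le_floor_add_one _
      have h2 : (⌊x / 2⌋ : ℝ) + 1 ≤ ⌊y / 2⌋ := by exact_mod_cast h
      have h3 : (⌊y / 2⌋ : ℝ) ≤ y / 2 := Int.floor_le _
      linarith

lemma h1_mono {x y : ℝ} (hxy : x ≤ y) : h1 x ≤ h1 y := by
  unfold h1
  have hf : (⌊x / 2⌋ : ℝ) ≤ ⌊y / 2⌋ := by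
    exact_mod_cast Int.floor_le_floor (by linarith)
  apply max_le
  · exact le_trans hf (le_max_left _ _)
  · rcases eq_or_lt_of_le (Int.ceil_le_ceil (by linarith : x / 2 ≤ y / 2)) with h | h
    · refine le_trans ?_ (le_max_right _ _)
      have : (⌈x / 2⌉ : ℝ) = ⌈y / 2⌉ := by exact_mod_cast h
      rw [this]; linarith
    · refine le_trans ?_ (le_max_left _ _)
      have h1 : (⌈y / 2⌉ : ℝ) - 1 ≤ ⌊y / 2⌋ := by
        have h4 : (⌈y / 2⌉ : ℝ) ≤ (⌊y / 2⌋ : ℝ) + 1 := by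
          exact_mod_cast Int.ceil_le_floor_add_one (y / 2)
        linarith
      have h2 : (⌈x / 2⌉ : ℝ) + 1 ≤ ⌈y / 2⌉ := by exact_mod_cast h
      have h3 : x / 2 ≤ (⌈x / 2⌉ : ℝ) := Int.le_ceil _
      linarith

theorem abs_sub_eq_abs_h0_add_abs_h1 (x y : ℝ) (hx : 0 ≤ x) (hy : 0 ≤ y) :
    |x - y| = |h0 x - h0 y| + |h1 x - h1 y| := by
  rcases le_total y x with h | h
  · have s1 := h_sum x
    have s2 := h_sum y
    rw [abs_of_nonneg (by linarith),
      abs_of_nonneg (by linarith [h0_mono h]),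
      abs_of_nonneg (by linarith [h1_mono h])]
    linarith
  · have s1 := h_sum x
    have s2 := h_sum y
    rw [abs_of_nonpos (by linarith),
      abs_of_nonpos (by linarith [h0_mono h]),
      abs_of_nonpos (by linarith [h1_mono h])]
    linarith
end

section
/- In a switch graph where at least one terminal is reachable from every non-terminal, every integral switching flow x satisfies x(e) < 2^{|V|}·t⁺ for every edge e, where t⁺ is the total number of starting tokens. -/
open Finset

/-- Outflow of `v`: total flow on the two out-edges `(v, s0 v)` and `(v, s1 v)`,
    where `x v false` is the flow on the even edge and `x v true` on the odd edge. -/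
def outflow {V : Type*} (x : V → Bool → ℕ) (v : V) : ℕ := x v false + x v true

/-- Inflow of `v`: total flow on all edges entering `v`. -/
def inflow {V : Type*} [Fintype V] [DecidableEq V]
    (s0 s1 : V → V) (x : V → Bool → ℕ) (v : V) : ℕ :=
  (∑ u : V, if s0 u = v then x u false else 0)
    + (∑ u : V, if s1 u = v then x u true else 0)

/-- Vertices from which `T` is reachable in at most `k` steps. -/
def reachSet {V : Type*} [Fintype V] [DecidableEq V]
    (s0 s1 : V → V) (T : Finset V) : ℕ → Finset V
  | 0 => T
  | k+1 => reachSet s0 s1 T k ∪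
      univ.filter (fun v => s0 v ∈ reachSet s0 s1 T k ∨ s1 v ∈ reachSet s0 s1 T k)

lemma reachSet_subset_succ {V : Type*} [Fintype V] [DecidableEq V]
    (s0 s1 : V → V) (T : Finset V) (k : ℕ) :
    reachSet s0 s1 T k ⊆ reachSet s0 s1 T (k+1) := by
  rw [reachSet]; exact subset_union_left

lemma reachSet_mono {V : Type*} [Fintype V] [DecidableEq V]
    (s0 s1 : V → V) (T : Finset V) {k m : ℕ} (h : k ≤ m) :
    reachSet s0 s1 T k ⊆ reachSet s0 s1 T m := by
  induction m with
  | zero => simp [Nat.le_zero.mp h]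
  | succ m ih =>
    rcases Nat.lt_or_ge k (m+1) with h' | h'
    · exact (ih (Nat.lt_succ_iff.mp h')).trans (reachSet_subset_succ s0 s1 T m)
    · have : k = m + 1 := le_antisymm h h'
      simp [this]

lemma reachSet_stab {V : Type*} [Fintype V] [DecidableEq V]
    (s0 s1 : V → V) (T : Finset V) {k : ℕ}
    (heq : reachSet s0 s1 T k = reachSet s0 s1 T (k+1)) :
    ∀ m, k ≤ m → reachSet s0 s1 T m = reachSet s0 s1 T k := by
  intro m hm
  induction m with
  | zero => simp [Nat.le_zero.mp hm]
  | succ m ih =>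
    rcases Nat.lt_or_ge k (m+1) with h' | h'
    · have hmk : k ≤ m := Nat.lt_succ_iff.mp h'
      have h1 : reachSet s0 s1 T m = reachSet s0 s1 T k := ih hmk
      rw [reachSet, h1, ← reachSet, ← heq]
    · exact (le_antisymm hm h') ▸ rfl

theorem switching_flow_upper_bound
    {V : Type*} [Fintype V] [DecidableEq V]
    (s0 s1 : V → V) (T : Finset V) (hT : T.Nonempty)
    (t : V → ℕ) (htot : 1 ≤ ∑ v ∈ T, t v)
    (x : V → Bool → ℕ)
    (hswitch : ∀ v, x v true ≤ x v false ∧ x v false ≤ x v true + 1)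
    (hcons : ∀ v ∉ T, outflow x v = inflow s0 s1 x v)
    (hterm : ∀ v ∈ T, outflow x v = t v)
    (hreach : ∀ v : V, v ∉ T →
      ∃ w ∈ T, Relation.ReflTransGen (fun a b => s0 a = b ∨ s1 a = b) v w)
    (hin : ∑ v ∈ T, inflow s0 s1 x v = ∑ v ∈ T, t v) :
    ∀ v b, x v b < 2 ^ Fintype.card V * ∑ v ∈ T, t v := by
  classical
  set M := ∑ v ∈ T, t v with hM
  set n := Fintype.card V with hn
  have hVne : Nonempty V := ⟨hT.choose⟩
  have hn1 : 1 ≤ n := Fintype.card_pos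
  set F := reachSet s0 s1 T with hF
  -- terminal inflow bound
  have hterm_in : ∀ v ∈ T, inflow s0 s1 x v ≤ M := by
    intro v hv
    calc inflow s0 s1 x v ≤ ∑ u ∈ T, inflow s0 s1 x u :=
          Finset.single_le_sum (fun i _ => Nat.zero_le _) hv
      _ = M := hin
  -- flow on an edge is at most inflow of its head
  have hx_in0 : ∀ v, x v false ≤ inflow s0 s1 x (s0 v) := by
    intro v
    have h1 : x v false ≤ ∑ u : V, if s0 u = s0 v then x u false else 0 := by
      have := Finset.single_le_sum
        (f := fun u => if s0 u = s0 v then x u false else 0)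
        (fun i _ => Nat.zero_le _) (Finset.mem_univ v)
      simpa using this
    exact h1.trans (Nat.le_add_right _ _)
  have hx_in1 : ∀ v, x v true ≤ inflow s0 s1 x (s1 v) := by
    intro v
    have h1 : x v true ≤ ∑ u : V, if s1 u = s1 v then x u true else 0 := by
      have := Finset.single_le_sum
        (f := fun u => if s1 u = s1 v then x u true else 0)
        (fun i _ => Nat.zero_le _) (Finset.mem_univ v)
      simpa using this
    exact h1.trans (Nat.le_add_left _ _)
  -- the key induction: flow bounds on reachSet
  have key : ∀ k, ∀ v ∈ F k,
      outflow x v + 1 ≤ 2 ^ k * (M + 1) ∧ inflow s0 s1 x v + 1 ≤ 2 ^ k * (M + 1) := by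
    intro k
    induction k with
    | zero =>
      intro v hv
      have h1 : outflow x v = t v := hterm v hv
      have h2 : t v ≤ M := Finset.single_le_sum (fun i _ => Nat.zero_le _) hv
      have h3 := hterm_in v hv
      constructor <;> simp <;> omega
    | succ k ih =>
      intro v hv
      have hout : outflow x v + 1 ≤ 2 ^ (k+1) * (M + 1) := by
        rw [hF, reachSet] at hv
        rcases Finset.mem_union.mp hv with hv | hv
        · have := (ih v hv).1
          have hle : (2:ℕ) ^ k * (M+1) ≤ 2 ^ (k+1) * (M+1) :=
            Nat.mul_le_mul_right _ (Nat.pow_le_pow_right (by norm_num) (Nat.le_succ k))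
          omega
        · rcases (Finset.mem_filter.mp hv).2 with h | h
          · have hin' := (ih _ h).2
            have h2 : x v false ≤ inflow s0 s1 x (s0 v) := hx_in0 v
            have h3 := hswitch v
            have : outflow x v + 1 ≤ 2 * (x v false + 1) := by
              unfold outflow; omega
            calc outflow x v + 1 ≤ 2 * (x v false + 1) := this
              _ ≤ 2 * (inflow s0 s1 x (s0 v) + 1) := by omega
              _ ≤ 2 * (2 ^ k * (M+1)) := by omega
              _ = 2 ^ (k+1) * (M+1) := by ring
          · have hin' := (ih _ h).2
            have h2 : x v true ≤ inflow s0 s1 x (s1 v) := hx_in1 v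
            have h3 := hswitch v
            have : outflow x v + 1 ≤ 2 * (x v true + 1) := by
              unfold outflow; omega
            calc outflow x v + 1 ≤ 2 * (x v true + 1) := this
              _ ≤ 2 * (inflow s0 s1 x (s1 v) + 1) := by omega
              _ ≤ 2 * (2 ^ k * (M+1)) := by omega
              _ = 2 ^ (k+1) * (M+1) := by ring
      refine ⟨hout, ?_⟩
      by_cases hvT : v ∈ T
      · have h3 := hterm_in v hvT
        have : (1:ℕ) * (M+1) ≤ 2 ^ (k+1) * (M+1) :=
          Nat.mul_le_mul_right _ (Nat.one_le_two_pow)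
        omega
      · have := hcons v hvT
        omega
  -- stabilization happens before n
  have hexists : ∃ k < n, F k = F (k+1) := by
    by_contra h
    push_neg at h
    have hcard : ∀ k, k ≤ n → k + 1 ≤ (F k).card := by
      intro k hk
      induction k with
      | zero => simpa [hF, reachSet] using Finset.Nonempty.card_pos hT
      | succ k ih =>
        have hk' : k ≤ n := Nat.le_of_succ_le hk
        have h1 := ih hk'
        have hne : F k ≠ F (k+1) := h k (Nat.lt_of_succ_le hk)
        have hss : F k ⊂ F (k+1) :=
          Finset.ssubset_iff_subset_ne.mpr ⟨reachSet_subset_succ s0 s1 T k, hne⟩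
        have := Finset.card_lt_card hss
        omega
    have h1 := hcard n le_rfl
    have h2 : (F n).card ≤ n := by
      simpa [hn] using Finset.card_le_univ (F n)
    omega
  obtain ⟨k, hkn, heq⟩ := hexists
  -- the stabilized set is everything
  have hclosed : ∀ v w, Relation.ReflTransGen (fun a b => s0 a = b ∨ s1 a = b) v w →
      w ∈ F k → v ∈ F k := by
    intro v w hvw hw
    induction hvw using Relation.ReflTransGen.head_induction_on with
    | refl => exact hw
    | head hab _ ih =>
      rename_i a b _
      have hb : b ∈ F k := ih
      have : a ∈ F (k+1) := by
        rw [hF, reachSet]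
        refine Finset.mem_union.mpr (Or.inr (Finset.mem_filter.mpr ⟨Finset.mem_univ _, ?_⟩))
        rcases hab with h | h
        · exact Or.inl (h ▸ hb)
        · exact Or.inr (h ▸ hb)
      rwa [heq]
  have huniv : F k = Finset.univ := by
    apply Finset.eq_univ_of_forall
    intro v
    by_cases hv : v ∈ T
    · exact reachSet_mono s0 s1 T (Nat.zero_le k) hv
    · obtain ⟨w, hwT, hpath⟩ := hreach v hv
      exact hclosed v w hpath (reachSet_mono s0 s1 T (Nat.zero_le k) hwT)
  have hFn1 : F (n - 1) = Finset.univ := by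
    rcases Nat.lt_or_ge k (n-1) with h | h
    · have := reachSet_stab s0 s1 T heq (n-1) (le_of_lt h)
      rw [← hF] at this
      rw [this, huniv]
    · have hk1 : k = n - 1 := le_antisymm (by omega) h
      rw [← hk1, huniv]
  -- conclusion
  intro v b
  have hv : v ∈ F (n-1) := hFn1 ▸ Finset.mem_univ v
  have hbd := (key (n-1) v hv).1
  have hsw := hswitch v
  have h2x : 2 * x v b ≤ outflow x v + 1 := by
    cases b <;> unfold outflow <;> omega
  have hpow : (2:ℕ) ^ n = 2 ^ (n-1) * 2 := by
    rw [← pow_succ]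
    congr 1
    omega
  have hstep : 2 ^ (n-1) * (M + 1) ≤ 2 ^ n * M := by
    rw [hpow]
    calc 2 ^ (n-1) * (M+1) ≤ 2 ^ (n-1) * (2 * M) :=
          Nat.mul_le_mul_left _ (by omega)
      _ = 2 ^ (n-1) * 2 * M := by ring
  have h1 : 2 * x v b ≤ 2 ^ n * M := le_trans (h2x.trans hbd) hstep
  have h2 : 1 ≤ 2 ^ n * M :=
    Nat.mul_pos (Nat.two_pow_pos n) htot
  omega
end

section
/- Let g be the projection to non-terminals of the one-step update of a switch graph with terminals T and integer token numbers (t⁺_v)_{v∈T}. A vector x ∈ (ℕ)^{V∖T} is a fixed point of g if and only if the edge function y defined by y(v,s₀(v)) = h₀(x'_v), y(v,s₁(v)) = h₁(x'_v) (where x' extends x by x'_v = t⁺_v on T) is an integral switching flow. -/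
open Finset

lemma hnat (n : ℕ) : h0 (n:ℝ) = (((n+1)/2 : ℕ) : ℝ) ∧ h1 (n:ℝ) = ((n/2 : ℕ) : ℝ) := by
  obtain ⟨k, hk | hk⟩ := Nat.even_or_odd' n <;> subst hk
  · have h2 : ((2*k:ℕ):ℝ)/2 = ((k:ℤ):ℝ) := by push_cast; ring
    have e1 : (2*k+1)/2 = k := by omega
    have e2 : (2*k)/2 = k := by omega
    simp only [h0, h1, h2, Int.floor_intCast, Int.ceil_intCast, e1, e2]
    constructor <;> [rw [min_eq_right]; rw [max_eq_left]] <;> push_cast <;> linarith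
  · have hf : ⌊((2*k+1:ℕ):ℝ)/2⌋ = (k:ℤ) := by
      rw [Int.floor_eq_iff]
      push_cast; constructor <;> nlinarith
    have hc : ⌈((2*k+1:ℕ):ℝ)/2⌉ = (k:ℤ)+1 := by
      rw [Int.ceil_eq_iff]
      push_cast; constructor <;> nlinarith
    have e1 : (2*k+1+1)/2 = k+1 := by omega
    have e2 : (2*k+1)/2 = k := by omega
    simp only [h0, h1, hf, hc, e1, e2]
    constructor <;> [rw [min_eq_right]; rw [max_eq_left]] <;> push_cast <;> linarith

/-- One-step update of the switch graph `(V, s0, s1)`. -/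
noncomputable def oneStep {V : Type*} [Fintype V] [DecidableEq V]
    (s0 s1 : V → V) (x : V → ℝ) : V → ℝ :=
  fun v => (∑ u : V, if s0 u = v then h0 (x u) else 0)
    + (∑ u : V, if s1 u = v then h1 (x u) else 0)

/-- Outflow of `v` in an edge flow `y`, where `y v false` is the value on the
    even out-edge `(v, s0 v)` and `y v true` on the odd out-edge `(v, s1 v)`. -/
def outflowR {V : Type*} (y : V → Bool → ℝ) (v : V) : ℝ := y v false + y v true

/-- Inflow of `v` in an edge flow `y`. -/
def inflowR {V : Type*} [Fintype V] [DecidableEq V]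
    (s0 s1 : V → V) (y : V → Bool → ℝ) (v : V) : ℝ :=
  (∑ u : V, if s0 u = v then y u false else 0)
    + (∑ u : V, if s1 u = v then y u true else 0)

theorem fixed_point_iff_integral_switching_flow
    {V : Type*} [Fintype V] [DecidableEq V]
    (s0 s1 : V → V) (T : Finset V) (t : V → ℕ) (x : V → ℕ)
    (ext : V → ℝ) (hext : ∀ v, ext v = if v ∈ T then (t v : ℝ) else (x v : ℝ))
    (y : V → Bool → ℝ)
    (hy : ∀ v, y v false = h0 (ext v) ∧ y v true = h1 (ext v)) :
    (∀ v ∉ T, oneStep s0 s1 ext v = (x v : ℝ)) ↔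
      ((∀ v b, ∃ k : ℕ, y v b = (k : ℝ)) ∧
       (∀ v, y v false - y v true = 0 ∨ y v false - y v true = 1) ∧
       (∀ v ∉ T, outflowR y v = inflowR s0 s1 y v) ∧
       (∀ v ∈ T, outflowR y v = (t v : ℝ))) := by
  set N : V → ℕ := fun v => if v ∈ T then t v else x v with hN
  have hextN : ∀ v, ext v = (N v : ℝ) := by
    intro v; rw [hext]; simp only [hN]; split <;> rfl
  have hy0 : ∀ v, y v false = (((N v + 1)/2 : ℕ) : ℝ) := fun v => by
    rw [(hy v).1, hextN, (hnat (N v)).1]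
  have hy1 : ∀ v, y v true = ((N v / 2 : ℕ) : ℝ) := fun v => by
    rw [(hy v).2, hextN, (hnat (N v)).2]
  have hsum : ∀ v, outflowR y v = (N v : ℝ) := by
    intro v
    rw [outflowR, hy0, hy1, ← Nat.cast_add]
    norm_cast; omega
  have hflow : ∀ v, oneStep s0 s1 ext v = inflowR s0 s1 y v := by
    intro v
    rw [oneStep, inflowR]
    congr 1 <;> apply Finset.sum_congr rfl <;> intro u _ <;>
      simp only [(hy u).1, (hy u).2]
  constructor
  · intro h
    refine ⟨?_, ?_, ?_, ?_⟩
    · intro v b; cases b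
      · exact ⟨_, hy0 v⟩
      · exact ⟨_, hy1 v⟩
    · intro v
      rw [hy0, hy1]
      rcases Nat.even_or_odd (N v) with ⟨k, hk⟩ | ⟨k, hk⟩
      · left; rw [hk]
        have e1 : (k + k + 1)/2 = k := by omega
        have e2 : (k + k)/2 = k := by omega
        rw [e1, e2]; ring
      · right; rw [hk]
        have e1 : (2*k + 1 + 1)/2 = k + 1 := by omega
        have e2 : (2*k + 1)/2 = k := by omega
        rw [e1, e2]; push_cast; ring
    · intro v hv
      rw [hsum, ← hflow, h v hv]
      simp [hN, hv]
    · intro v hv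
      rw [hsum]; simp [hN, hv]
  · rintro ⟨-, -, h3, -⟩ v hv
    rw [hflow, ← h3 v hv, hsum]
    simp [hN, hv]
end

section
/- Let g be the projection to non-terminals of the one-step update of a switch graph with terminals T and integer token numbers, and let x be a fixed point of g. If the induced edge value y(e) is non-integral for some edge e = (u, v) with u ∈ V∖T, then there exists a directed cycle through non-terminal vertices, containing e, on which every edge has a non-integral y-value. -/
open Finset

lemma h0_or_h1_int (x : ℝ) : (∃ k : ℤ, h0 x = k) ∨ (∃ k : ℤ, h1 x = k) := by
  unfold h0 h1
  rcases le_total (x - ⌊x/2⌋) ((⌈x/2⌉ : ℤ) : ℝ) with h | h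
  · right
    exact ⟨⌊x/2⌋, max_eq_left (by linarith)⟩
  · left
    exact ⟨⌈x/2⌉, min_eq_right h⟩

lemma hint (k : ℤ) : (∃ m : ℤ, h0 (k:ℝ) = m) ∧ (∃ m : ℤ, h1 (k:ℝ) = m) := by
  constructor
  · exact ⟨min (k - ⌊(k:ℝ)/2⌋) ⌈(k:ℝ)/2⌉, by unfold h0; push_cast; ring_nf⟩
  · exact ⟨max ⌊(k:ℝ)/2⌋ (k - ⌈(k:ℝ)/2⌉), by unfold h1; push_cast; ring_nf⟩

lemma isInt_sum {V : Type*} (s : Finset V) (f : V → ℝ)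
    (h : ∀ i ∈ s, ∃ k : ℤ, f i = k) : ∃ k : ℤ, ∑ i ∈ s, f i = k := by
  classical
  choose g hg using h
  refine ⟨∑ i ∈ s.attach, g i i.2, ?_⟩
  rw [← Finset.sum_attach s f]
  push_cast
  exact Finset.sum_congr rfl fun i _ => hg i i.2

theorem fractional_edge_lies_on_fractional_cycle
    {V : Type*} [Fintype V] [DecidableEq V]
    (s0 s1 : V → V) (T : Finset V) (t : V → ℕ) (x : V → ℝ)
    (hx : ∀ v, 0 ≤ x v)
    (ext : V → ℝ) (hext : ∀ v, ext v = if v ∈ T then (t v : ℝ) else x v)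
    (hfix : ∀ v ∉ T, oneStep s0 s1 ext v = x v)
    (y : V → Bool → ℝ)
    (hy : ∀ v, y v false = h0 (ext v) ∧ y v true = h1 (ext v))
    (u : V) (hu : u ∉ T) (b0 : Bool) (hfrac : ¬ ∃ k : ℤ, y u b0 = (k : ℝ)) :
    ∃ (m : ℕ) (c : ℕ → V) (bb : ℕ → Bool), 1 ≤ m ∧
      c 0 = u ∧ bb 0 = b0 ∧ c m = u ∧
      ∀ i < m, c i ∉ T ∧
        (if bb i then s1 (c i) else s0 (c i)) = c (i + 1) ∧
        ¬ ∃ k : ℤ, y (c i) (bb i) = (k : ℝ) := by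
  classical
  have hExt : ∀ v ∉ T, ext v = x v := by
    intro v hv; rw [hext v]; simp [hv]
  -- out-edges at terminals are integral
  have hyT : ∀ v ∈ T, ∀ b : Bool, ∃ k : ℤ, y v b = k := by
    intro v hv b
    have hev : ext v = ((t v : ℤ) : ℝ) := by rw [hext v]; simp [hv]
    cases b
    · rw [(hy v).1, hev]; exact (hint (t v)).1
    · rw [(hy v).2, hev]; exact (hint (t v)).2
  -- a fractional out-edge forces a fractional token number
  have hxfrac : ∀ v ∉ T, ∀ b : Bool, (¬ ∃ k : ℤ, y v b = k) → ¬ ∃ k : ℤ, x v = k := by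
    intro v hv b hb hk
    obtain ⟨k, hk⟩ := hk
    apply hb
    have hev : ext v = ((k : ℤ) : ℝ) := by rw [hExt v hv, hk]
    cases b
    · rw [(hy v).1, hev]; exact (hint k).1
    · rw [(hy v).2, hev]; exact (hint k).2
  -- key: every fractional edge with non-terminal tail has a fractional
  -- predecessor edge with non-terminal tail
  have key : ∀ v ∉ T, ∀ b : Bool, (¬ ∃ k : ℤ, y v b = k) →
      ∃ p : V, ∃ c : Bool, p ∉ T ∧ (¬ ∃ k : ℤ, y p c = k) ∧
        (if c then s1 p else s0 p) = v := by
    intro v hv b hb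
    by_contra hcon
    apply hxfrac v hv b hb
    have hterm : ∀ p (c : Bool), (if c then s1 p else s0 p) = v → ∃ k : ℤ, y p c = k := by
      intro p c hpc
      by_cases hpT : p ∈ T
      · exact hyT p hpT c
      · by_contra hf
        exact hcon ⟨p, c, hpT, hf, hpc⟩
    obtain ⟨k0, hk0⟩ := isInt_sum Finset.univ (fun p => if s0 p = v then y p false else 0)
      (by
        intro p _
        by_cases h : s0 p = v
        · simp only [h, if_true]
          exact hterm p false (by simpa using h)
        · exact ⟨0, by simp [h]⟩)
    obtain ⟨k1, hk1⟩ := isInt_sum Finset.univ (fun p => if s1 p = v then y p true else 0)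
      (by
        intro p _
        by_cases h : s1 p = v
        · simp only [h, if_true]
          exact hterm p true (by simpa using h)
        · exact ⟨0, by simp [h]⟩)
    refine ⟨k0 + k1, ?_⟩
    have hfv := hfix v hv
    unfold oneStep at hfv
    rw [← hfv]
    push_cast
    rw [← hk0, ← hk1]
    congr 1
    · exact Finset.sum_congr rfl fun p _ => by by_cases h : s0 p = v <;> simp [h, (hy p).1]
    · exact Finset.sum_congr rfl fun p _ => by by_cases h : s1 p = v <;> simp [h, (hy p).2]
  -- at most one fractional out-edge per vertex
  have hone : ∀ v (b c : Bool), (¬ ∃ k : ℤ, y v b = k) → (¬ ∃ k : ℤ, y v c = k) → b = c := by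
    intro v b c hb hc
    have hnot : ¬ ((¬ ∃ k : ℤ, y v false = k) ∧ (¬ ∃ k : ℤ, y v true = k)) := by
      rintro ⟨hf, ht⟩
      rcases h0_or_h1_int (ext v) with h | h
      · exact hf (by rw [(hy v).1]; exact h)
      · exact ht (by rw [(hy v).2]; exact h)
    cases b <;> cases c
    · rfl
    · exact absurd ⟨hb, hc⟩ hnot
    · exact absurd ⟨hc, hb⟩ hnot
    · rfl
  -- the predecessor map on fractional edges
  have hexists : ∀ e : {p : V × Bool // p.1 ∉ T ∧ ¬ ∃ k : ℤ, y p.1 p.2 = k},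
      ∃ e' : {p : V × Bool // p.1 ∉ T ∧ ¬ ∃ k : ℤ, y p.1 p.2 = k},
        (if e'.1.2 then s1 e'.1.1 else s0 e'.1.1) = e.1.1 := by
    intro e
    obtain ⟨p, c, hpT, hpf, hpc⟩ := key e.1.1 e.2.1 e.1.2 e.2.2
    exact ⟨⟨(p, c), hpT, hpf⟩, hpc⟩
  choose pred hpred using hexists
  have hinj : Function.Injective pred := by
    intro a b hab
    have h1 : a.1.1 = b.1.1 := by rw [← hpred a, ← hpred b, hab]
    have h2 : a.1.2 = b.1.2 := by
      apply hone a.1.1 _ _ a.2.2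
      rw [h1]; exact b.2.2
    exact Subtype.ext (Prod.ext h1 h2)
  set e₀ : {p : V × Bool // p.1 ∉ T ∧ ¬ ∃ k : ℤ, y p.1 p.2 = k} := ⟨(u, b0), hu, hfrac⟩
    with he₀
  have hcyc : ∀ a b : ℕ, a < b → pred^[a] e₀ = pred^[b] e₀ → pred^[b - a] e₀ = e₀ := by
    intro a b h hab2
    apply hinj.iterate a
    calc pred^[a] (pred^[b - a] e₀) = pred^[b] e₀ := by
          rw [← Function.iterate_add_apply]
          congr 1
          omega
      _ = pred^[a] e₀ := hab2.symm
  obtain ⟨a, b', hab, heq⟩ := Finite.exists_ne_map_eq_of_infinite (fun n : ℕ => pred^[n] e₀)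
  obtain ⟨m, hm1, hme⟩ : ∃ m, 1 ≤ m ∧ pred^[m] e₀ = e₀ := by
    rcases hab.lt_or_gt with h | h
    · exact ⟨b' - a, by omega, hcyc a b' h heq⟩
    · exact ⟨a - b', by omega, hcyc b' a h heq.symm⟩
  refine ⟨m, fun i => (pred^[m - i] e₀).1.1, fun i => (pred^[m - i] e₀).1.2,
    hm1, ?_, ?_, ?_, ?_⟩
  · show (pred^[m - 0] e₀).1.1 = u
    rw [Nat.sub_zero, hme]
  · show (pred^[m - 0] e₀).1.2 = b0
    rw [Nat.sub_zero, hme]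
  · show (pred^[m - m] e₀).1.1 = u
    rw [Nat.sub_self]
    rfl
  · intro i hi
    refine ⟨(pred^[m - i] e₀).2.1, ?_, (pred^[m - i] e₀).2.2⟩
    have h1 : m - i = (m - (i + 1)) + 1 := by omega
    beta_reduce
    rw [h1, Function.iterate_succ_apply']
    exact hpred (pred^[m - (i + 1)] e₀)
end
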